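/- arXiv:1108.1776 — 2 statements merged into one kernel-verified Lean document; each statement's English description precedes it below -/
import Mathlib

section
/- Let (W,S) be a finite Coxeter system of rank n with Coxeter element c = c₁⋯c_n and c-sorting word w₀(c) of the longest element. Let Q = c^k·w₀(c) = (q₁,…,q_{kn+N}) and, for each index i, set t_i = q₁q₂⋯q_{i-1}·q_i·q_{i-1}⋯q₂q₁. Then a set of positions {ℓ₁ < ℓ₂ < … < ℓ_{kn}} is a facet of the subword complex Δ(Q, w₀) if and only if t_{ℓ_{kn}} ⋯ t_{ℓ₂} t_{ℓ₁} = c^k. -/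
open List

namespace SubwordComplex

variable {B : Type*} [DecidableEq B] [Inhabited B] {W : Type*} [Group W]
variable {M : CoxeterMatrix B} (cs : CoxeterSystem M W)

/-- The word formed by the letters of `Q` at positions not in `F`. -/
def complement (Q : List B) (F : Finset ℕ) : List B :=
  (((List.range Q.length).zip Q).filter (fun p => p.1 ∉ F)).map Prod.snd

/-- `L` contains a reduced expression for `π` as a subword. -/
def ContainsReduced (L : List B) (π : W) : Prop :=
  ∃ L' : List B, L'.Sublist L ∧ cs.IsReduced L' ∧ cs.wordProd L' = π

/-- `F` is a face of the subword complex `Δ(Q, π)`. -/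
def IsFace (Q : List B) (π : W) (F : Finset ℕ) : Prop :=
  F ⊆ Finset.range Q.length ∧ ContainsReduced cs (complement Q F) π

/-- `F` is a facet (maximal face) of the subword complex `Δ(Q, π)`. -/
def IsFacet (Q : List B) (π : W) (F : Finset ℕ) : Prop :=
  IsFace cs Q π F ∧ ∀ F' : Finset ℕ, IsFace cs Q π F' → F ⊆ F' → F' = F

/-- `w₀` is the longest element. -/
def IsLongest (w₀ : W) : Prop := ∀ w : W, cs.length w ≤ cs.length w₀

/-- The Demazure product of a word. -/
noncomputable def demazure (Q : List B) : W :=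
  Q.foldl (fun w i => if cs.length w < cs.length (w * cs.simple i) then w * cs.simple i
    else w) 1

/-- A reduced word for a Coxeter element: each generator appears exactly once. -/
def IsCoxeterWord (c : List B) : Prop := c.Nodup ∧ ∀ b : B, b ∈ c

/-- The letter of the infinite word `c^∞` at position `i`. -/
def cInfLetter (c : List B) (i : ℕ) : B := c.getD (i % c.length) default

/-- `P` is the lexicographically first increasing list of positions in `c^∞` whose
associated word is a reduced word for `w`. -/
def IsSortingIndices (c : List B) (w : W) (P : List ℕ) : Prop :=
  P.Chain' (· < ·) ∧ cs.IsReduced (P.map (cInfLetter c)) ∧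
    cs.wordProd (P.map (cInfLetter c)) = w ∧
    ∀ P' : List ℕ, P'.Chain' (· < ·) → cs.IsReduced (P'.map (cInfLetter c)) →
      cs.wordProd (P'.map (cInfLetter c)) = w → P = P' ∨ List.Lex (· < ·) P P'

/-- `sw` is the `c`-sorting word of `w`. -/
def IsSortingWord (c : List B) (w : W) (sw : List B) : Prop :=
  ∃ P : List ℕ, IsSortingIndices cs c w P ∧ sw = P.map (cInfLetter c)

/-- One step of interchanging two adjacent commuting letters. -/
def CommStep (L L' : List B) : Prop :=
  ∃ (u v : List B) (a b : B),
    cs.simple a * cs.simple b = cs.simple b * cs.simple a ∧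
    L = u ++ a :: b :: v ∧ L' = u ++ b :: a :: v

/-- Two words coincide up to commutations. -/
def CommEquiv (L L' : List B) : Prop := Relation.EqvGen (CommStep cs) L L'

/-- The (combinatorial model of the) root `w(α_s)`: a pair consisting of the
reflection `w s w⁻¹` and a sign which is `true` if the root is positive. -/
noncomputable def rootPair (w : W) (s : B) : W × Bool :=
  (w * cs.simple s * w⁻¹, decide (cs.length w < cs.length (w * cs.simple s)))

/-- The negative of a root in the combinatorial model. -/
def negRoot (r : W × Bool) : W × Bool := (r.1, !r.2)

/-- The product of the letters of `Q \ F` occurring strictly before position `q`. -/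
def prefixProd (Q : List B) (F : Finset ℕ) (q : ℕ) : W :=
  cs.wordProd ((((List.range Q.length).zip Q).filter (fun p => p.1 ∉ F ∧ p.1 < q)).map Prod.snd)

/-- The root function `r_F` of a facet `F`, in the combinatorial model. -/
noncomputable def rootF (Q : List B) (F : Finset ℕ) (q : ℕ) : W × Bool :=
  rootPair cs (prefixProd cs Q F q) (Q.getD q default)


set_option linter.unusedSectionVars false

lemma mem_enum_fst_lt {Q : List B} {p : ℕ × B} (h : p ∈ (List.range Q.length).zip Q) : p.1 < Q.length := by
  obtain ⟨a, b⟩ := p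
  exact List.mem_range.mp (List.of_mem_zip h).1


/-- Key combinatorial identity. -/
lemma prod_refl_mul_comp (Q : List B) (L : List ℕ) (hL : List.Pairwise (· < ·) L)
    (hsub : ∀ l ∈ L, l < Q.length) :
    ((L.map (fun l => cs.wordProd (Q.take l) * cs.simple (Q.getD l default) *
      (cs.wordProd (Q.take l))⁻¹)).reverse.prod) *
      cs.wordProd ((((List.range Q.length).zip Q).filter (fun p => p.1 ∉ L)).map Prod.snd) = cs.wordProd Q := by
  induction Q using List.reverseRecOn generalizing L with
  | nil =>
    have hLnil : L = [] := by
      cases L with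
      | nil => rfl
      | cons a l => exact absurd (hsub a (by simp)) (by simp)
    simp [hLnil, CoxeterSystem.wordProd_nil]
  | append_singleton Q₀ b IH =>
    set n := Q₀.length with hn
    have henum : ((List.range (Q₀ ++ [b]).length).zip (Q₀ ++ [b])) = ((List.range Q₀.length).zip Q₀) ++ [(n, b)] := by
      rw [List.length_append, List.length_singleton, List.range_succ, List.zip_append (by simp)]; rfl
    by_cases hmem : n ∈ L
    · -- n is the last element of L
      have hne : L ≠ [] := by rintro rfl; simp at hmem
      have hsplit : L.dropLast ++ [L.getLast hne] = L := List.dropLast_append_getLast hne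
      have hpair : List.Pairwise (· < ·) (L.dropLast ++ [L.getLast hne]) := by
        rw [hsplit]; exact hL
      rw [List.pairwise_append] at hpair
      have hlast : L.getLast hne = n := by
        have h1 : L.getLast hne ∈ L := List.getLast_mem hne
        have h2 : L.getLast hne ≤ n := by
          have := hsub _ h1; simp at this; omega
        rcases List.mem_append.mp (by rw [hsplit]; exact hmem : n ∈ L.dropLast ++ [L.getLast hne]) with h | h
        · exact absurd (hpair.2.2 n (by simpa using h) (L.getLast hne) (by simp)) (by omega)
        · simp at h; omega
      have hLeq : L = L.dropLast ++ [n] := by rw [← hlast, hsplit]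
      set L' := L.dropLast with hL'
      have hL'lt : ∀ l ∈ L', l < n := by
        intro l hl
        exact hlast ▸ hpair.2.2 l hl _ (by simp)
      -- complement equality
      have hcomp : (((List.range (Q₀ ++ [b]).length).zip (Q₀ ++ [b])).filter (fun p => p.1 ∉ L)).map Prod.snd
          = (((List.range Q₀.length).zip Q₀).filter (fun p => p.1 ∉ L')).map Prod.snd := by
        rw [henum, List.filter_append]
        have h1 : List.filter (fun p => decide (p.1 ∉ L)) [(n, b)] = [] := by
          simp [hmem]
        rw [h1, List.append_nil]
        congr 1
        apply List.filter_congr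
        intro p hp
        have hplt : p.1 < n := mem_enum_fst_lt hp
        have : p.1 ∈ L ↔ p.1 ∈ L' := by
          rw [hLeq]; simp
          intro h; omega
        simp only [decide_eq_decide]
        rw [this]
      -- map equality over L'
      have hmapeq : L'.map (fun l => cs.wordProd ((Q₀ ++ [b]).take l) *
            cs.simple ((Q₀ ++ [b]).getD l default) * (cs.wordProd ((Q₀ ++ [b]).take l))⁻¹)
          = L'.map (fun l => cs.wordProd (Q₀.take l) * cs.simple (Q₀.getD l default) *
            (cs.wordProd (Q₀.take l))⁻¹) := by
        apply List.map_congr_left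
        intro l hl
        have hlt := hL'lt l hl
        rw [List.take_append_of_le_length (by omega), List.getD_append _ _ _ _ (by omega)]
      have htn : cs.wordProd ((Q₀ ++ [b]).take n) * cs.simple ((Q₀ ++ [b]).getD n default) *
          (cs.wordProd ((Q₀ ++ [b]).take n))⁻¹ = cs.wordProd Q₀ * cs.simple b * (cs.wordProd Q₀)⁻¹ := by
        rw [List.take_append_of_le_length (le_refl n), List.take_length,
          List.getD_append_right _ _ _ _ (le_refl n)]
        simp [hn]
      calc ((L.map _).reverse.prod) * _
          = (cs.wordProd Q₀ * cs.simple b * (cs.wordProd Q₀)⁻¹) *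
            (((L'.map (fun l => cs.wordProd (Q₀.take l) * cs.simple (Q₀.getD l default) *
              (cs.wordProd (Q₀.take l))⁻¹)).reverse.prod) *
              cs.wordProd ((((List.range Q₀.length).zip Q₀).filter (fun p => p.1 ∉ L')).map Prod.snd)) := by
            rw [hcomp]
            conv_lhs => rw [hLeq]
            rw [List.map_append, List.reverse_append, List.map_singleton, List.reverse_singleton,
              List.singleton_append, List.prod_cons, htn, hmapeq, mul_assoc]
        _ = (cs.wordProd Q₀ * cs.simple b * (cs.wordProd Q₀)⁻¹) * cs.wordProd Q₀ := by
            rw [IH L' (List.Pairwise.sublist (List.dropLast_sublist L) hL)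
              (fun l hl => (hL'lt l hl).trans_le (Nat.le_refl n))]
        _ = cs.wordProd (Q₀ ++ [b]) := by
            rw [CoxeterSystem.wordProd_append, CoxeterSystem.wordProd_singleton]
            group
    · -- n ∉ L : all elements of L are < n
      have hLlt : ∀ l ∈ L, l < n := by
        intro l hl
        have := hsub l hl; simp at this
        rcases Nat.lt_or_ge l n with h | h
        · exact h
        · exfalso; have : l = n := by omega
          exact hmem (this ▸ hl)
      have hcomp : (((List.range (Q₀ ++ [b]).length).zip (Q₀ ++ [b])).filter (fun p => p.1 ∉ L)).map Prod.snd
          = ((((List.range Q₀.length).zip Q₀).filter (fun p => p.1 ∉ L)).map Prod.snd) ++ [b] := by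
        rw [henum, List.filter_append]
        have h1 : List.filter (fun p => decide (p.1 ∉ L)) [(n, b)] = [(n, b)] := by
          simp [hmem]
        rw [h1, List.map_append]; rfl
      have hmapeq : L.map (fun l => cs.wordProd ((Q₀ ++ [b]).take l) *
            cs.simple ((Q₀ ++ [b]).getD l default) * (cs.wordProd ((Q₀ ++ [b]).take l))⁻¹)
          = L.map (fun l => cs.wordProd (Q₀.take l) * cs.simple (Q₀.getD l default) *
            (cs.wordProd (Q₀.take l))⁻¹) := by
        apply List.map_congr_left
        intro l hl
        have hlt := hLlt l hl
        rw [List.take_append_of_le_length (by omega), List.getD_append _ _ _ _ (by omega)]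
      rw [hcomp, hmapeq, CoxeterSystem.wordProd_append, CoxeterSystem.wordProd_append,
        CoxeterSystem.wordProd_singleton, ← mul_assoc,
        IH L hL (fun l hl => (hLlt l hl).trans_le (Nat.le_refl n))]


lemma comp_length (Q : List B) (L : List ℕ) (hL : List.Pairwise (· < ·) L)
    (hsub : ∀ l ∈ L, l < Q.length) :
    ((((List.range Q.length).zip Q).filter (fun p => p.1 ∉ L)).map Prod.snd).length = Q.length - L.length := by
  induction Q using List.reverseRecOn generalizing L with
  | nil =>
    have hLnil : L = [] := by
      cases L with
      | nil => rfl
      | cons a l => exact absurd (hsub a (by simp)) (by simp)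
    simp [hLnil]
  | append_singleton Q₀ b IH =>
    set n := Q₀.length with hn
    have henum : ((List.range (Q₀ ++ [b]).length).zip (Q₀ ++ [b])) = ((List.range Q₀.length).zip Q₀) ++ [(n, b)] := by
      rw [List.length_append, List.length_singleton, List.range_succ, List.zip_append (by simp)]; rfl
    have hLlen : L.length ≤ n + 1 := by
      have hnd : L.Nodup := hL.imp (fun h => Nat.ne_of_lt h)
      have : ∀ l ∈ L, l ∈ List.range (n+1) := by
        intro l hl; rw [List.mem_range]; simpa using hsub l hl
      calc L.length = L.toFinset.card := (List.toFinset_card_of_nodup hnd).symm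
        _ ≤ (Finset.range (n+1)).card := Finset.card_le_card (by
            intro x hx; rw [List.mem_toFinset] at hx
            rw [Finset.mem_range]; simpa using hsub x hx)
        _ = n + 1 := Finset.card_range _
    by_cases hmem : n ∈ L
    · have hne : L ≠ [] := by rintro rfl; simp at hmem
      have hsplit : L.dropLast ++ [L.getLast hne] = L := List.dropLast_append_getLast hne
      have hpair : List.Pairwise (· < ·) (L.dropLast ++ [L.getLast hne]) := by
        rw [hsplit]; exact hL
      rw [List.pairwise_append] at hpair
      have hlast : L.getLast hne = n := by
        have h1 : L.getLast hne ∈ L := List.getLast_mem hne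
        have h2 : L.getLast hne ≤ n := by
          have := hsub _ h1; simp at this; omega
        rcases List.mem_append.mp (by rw [hsplit]; exact hmem : n ∈ L.dropLast ++ [L.getLast hne]) with h | h
        · exact absurd (hpair.2.2 n (by simpa using h) (L.getLast hne) (by simp)) (by omega)
        · simp at h; omega
      have hLeq : L = L.dropLast ++ [n] := by rw [← hlast, hsplit]
      set L' := L.dropLast with hL'
      have hL'lt : ∀ l ∈ L', l < n := by
        intro l hl
        exact hlast ▸ hpair.2.2 l hl _ (by simp)
      have hcomp : (((List.range (Q₀ ++ [b]).length).zip (Q₀ ++ [b])).filter (fun p => p.1 ∉ L)).map Prod.snd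
          = (((List.range Q₀.length).zip Q₀).filter (fun p => p.1 ∉ L')).map Prod.snd := by
        rw [henum, List.filter_append]
        have h1 : List.filter (fun p => decide (p.1 ∉ L)) [(n, b)] = [] := by
          simp [hmem]
        rw [h1, List.append_nil]
        congr 1
        apply List.filter_congr
        intro p hp
        have hplt : p.1 < n := mem_enum_fst_lt hp
        have : p.1 ∈ L ↔ p.1 ∈ L' := by
          rw [hLeq]; simp
          intro h; omega
        simp only [decide_eq_decide]
        rw [this]
      have hL'len : L'.length = L.length - 1 := by
        conv_rhs => rw [hLeq]
        simp
      rw [hcomp, IH L' (List.Pairwise.sublist (List.dropLast_sublist L) hL) hL'lt, hL'len]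
      have hLpos : 1 ≤ L.length := List.length_pos_iff.mpr hne
      simp only [List.length_append, List.length_singleton]
      omega
    · have hLlt : ∀ l ∈ L, l < n := by
        intro l hl
        have := hsub l hl; simp at this
        rcases Nat.lt_or_ge l n with h | h
        · exact h
        · exfalso; have : l = n := by omega
          exact hmem (this ▸ hl)
      have hcomp : (((List.range (Q₀ ++ [b]).length).zip (Q₀ ++ [b])).filter (fun p => p.1 ∉ L)).map Prod.snd
          = ((((List.range Q₀.length).zip Q₀).filter (fun p => p.1 ∉ L)).map Prod.snd) ++ [b] := by
        rw [henum, List.filter_append]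
        have h1 : List.filter (fun p => decide (p.1 ∉ L)) [(n, b)] = [(n, b)] := by
          simp [hmem]
        rw [h1, List.map_append]; rfl
      have hLn : L.length ≤ n := by
        have hnd : L.Nodup := hL.imp (fun h => Nat.ne_of_lt h)
        calc L.length = L.toFinset.card := (List.toFinset_card_of_nodup hnd).symm
          _ ≤ (Finset.range n).card := Finset.card_le_card (by
              intro x hx; rw [List.mem_toFinset] at hx
              rw [Finset.mem_range]; exact hLlt x hx)
          _ = n := Finset.card_range _
      rw [hcomp, List.length_append, IH L hL hLlt]
      simp only [List.length_append, List.length_singleton]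
      omega


lemma complement_eq_sort (Q : List B) (F : Finset ℕ) :
    complement Q F = (((List.range Q.length).zip Q).filter (fun p => p.1 ∉ F.sort (· ≤ ·))).map Prod.snd := by
  unfold complement
  congr 1
  apply List.filter_congr
  intro p _
  simp [Finset.mem_sort]

lemma complement_length (Q : List B) (F : Finset ℕ) (hF : F ⊆ Finset.range Q.length) :
    (complement Q F).length = Q.length - F.card := by
  rw [complement_eq_sort, comp_length Q _ ((Finset.sortedLT_sort F).pairwise)
    (fun l hl => List.mem_range.mp (hF ((Finset.mem_sort _).mp hl))),
    Finset.length_sort]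

lemma wordProd_join_replicate (c : List B) (k : ℕ) :
    cs.wordProd (List.flatten (List.replicate k c)) = (cs.wordProd c) ^ k := by
  induction k with
  | zero => simp [CoxeterSystem.wordProd_nil]
  | succ k ih =>
    rw [List.replicate_succ]
    simp only [List.flatten_cons]
    rw [CoxeterSystem.wordProd_append, ih, pow_succ']


/-- facets of the multi-cluster complex are exactly the position sets whose
associated reflections multiply (in decreasing order) to `c^k`. -/
theorem facet_iff_reflection_product [Finite W] (w₀ : W) (hw₀ : IsLongest cs w₀)
    (c : List B) (hc : IsCoxeterWord c) (k : ℕ)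
    (wc : List B) (hwc : IsSortingWord cs c w₀ wc)
    (Q : List B) (hQdef : Q = List.flatten (List.replicate k c) ++ wc)
    (F : Finset ℕ) (hFsub : F ⊆ Finset.range Q.length) (hFcard : F.card = k * c.length) :
    IsFacet cs Q w₀ F ↔
      ((F.sort (· ≤ ·)).map (fun l =>
        cs.wordProd (Q.take l) * cs.simple (Q.getD l default) *
          (cs.wordProd (Q.take l))⁻¹)).reverse.prod = (cs.wordProd c) ^ k := by
  obtain ⟨P, hP, hwceq⟩ := hwc
  have hwcred : cs.IsReduced wc := hwceq ▸ hP.2.1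
  have hwcprod : cs.wordProd wc = w₀ := hwceq ▸ hP.2.2.1
  have hlenw₀ : cs.length w₀ = wc.length := by
    rw [← hwcprod]; exact hwcred
  have hQlen : Q.length = k * c.length + wc.length := by
    rw [hQdef]
    simp [List.length_flatten, List.map_replicate, List.sum_replicate, smul_eq_mul]
  have hπQ : cs.wordProd Q = (cs.wordProd c) ^ k * w₀ := by
    rw [hQdef, CoxeterSystem.wordProd_append, hwcprod, wordProd_join_replicate]
  have hkey : ((F.sort (· ≤ ·)).map (fun l =>
        cs.wordProd (Q.take l) * cs.simple (Q.getD l default) *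
          (cs.wordProd (Q.take l))⁻¹)).reverse.prod * cs.wordProd (complement Q F)
      = cs.wordProd Q := by
    rw [complement_eq_sort]
    exact prod_refl_mul_comp cs Q _ ((Finset.sortedLT_sort F).pairwise)
      (fun l hl => List.mem_range.mp (hFsub ((Finset.mem_sort _).mp hl)))
  have hclen : (complement Q F).length = wc.length := by
    rw [complement_length Q F hFsub, hFcard, hQlen]; omega
  constructor
  · rintro ⟨⟨_, L', hsubl, hred, hprod⟩, _⟩
    have hL'len : L'.length = (complement Q F).length := by
      rw [hclen, ← hlenw₀, ← hprod]
      exact hred.symm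
    have hLc : L' = complement Q F := hsubl.eq_of_length hL'len
    have hcompprod : cs.wordProd (complement Q F) = w₀ := hLc ▸ hprod
    rw [hcompprod, hπQ] at hkey
    exact mul_right_cancel hkey
  · intro hT
    have hcompprod : cs.wordProd (complement Q F) = w₀ := by
      rw [hT, hπQ] at hkey
      exact mul_left_cancel hkey
    refine ⟨⟨hFsub, complement Q F, List.Sublist.refl _, ?_, hcompprod⟩, ?_⟩
    · unfold CoxeterSystem.IsReduced
      rw [hcompprod, hlenw₀, hclen]
    · intro F' hF' hFF'
      obtain ⟨hF'sub, L', hsubl, hred, hprod⟩ := hF'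
      have h1 : L'.length = wc.length := by
        rw [← hlenw₀, ← hprod]; exact hred.symm
      have h2 : L'.length ≤ (complement Q F').length := hsubl.length_le
      have h3 : (complement Q F').length = Q.length - F'.card :=
        complement_length Q F' hF'sub
      have h4 : F'.card ≤ Q.length := by
        calc F'.card ≤ (Finset.range Q.length).card := Finset.card_le_card hF'sub
          _ = Q.length := Finset.card_range _
      have hcard' : F'.card ≤ F.card := by
        rw [hFcard]; omega
      exact (Finset.eq_of_subset_of_card_le hFF' hcard').symm


end SubwordComplex
end

section
/- Every word Q = (q₁,…,q_r) in the generators S of a finite Coxeter group W of rank n can be embedded as a subword of Q' = c^k·w₀(c) for any k ≥ r, by placing the i-th letter of Q within the i-th copy of c. If furthermore δ(Q) = w₀, then the set of positions Q' \ Q is a face of the multi-cluster complex Δ(Q', w₀), and the link of this face in Δ(Q', w₀) is isomorphic to the subword complex Δ(Q, w₀). -/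
open List

namespace SubwordComplex

variable {B : Type*} [DecidableEq B] [Inhabited B] {W : Type*} [Group W]
variable {M : CoxeterMatrix B} (cs : CoxeterSystem M W)

lemma complement_eq (Q : List B) (S : Finset ℕ) :
    complement Q S = ((List.range Q.length).filter (fun i => i ∉ S)).map
      (fun i => Q.getD i default) := by
  have henum : (List.range Q.length).zip Q = (List.range Q.length).map (fun i => (i, Q.getD i default)) := by
    apply List.ext_getElem
    · simp
    · intro j h1 h2
      simp only [List.length_zip, List.length_range, min_self] at h1
      simp only [List.getElem_zip, List.getElem_map, List.getElem_range,
        List.getD_eq_getElem _ _ h1]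
  rw [complement, henum, List.filter_map, List.map_map]
  rfl

lemma complement_empty (Q : List B) : complement Q ∅ = Q := by
  rw [complement_eq]
  have h : (List.range Q.length).filter (fun i => i ∉ (∅ : Finset ℕ)) = List.range Q.length :=
    List.filter_eq_self.mpr (by simp)
  rw [h]
  apply List.ext_getElem (by simp)
  intro j h1 h2
  simp only [List.getElem_map, List.getElem_range]
  exact List.getD_eq_getElem _ _ h2

lemma filter_range_eq {N N' : ℕ} {emb : ℕ → ℕ} (hmono : StrictMono emb)
    (hlt : ∀ i < N, emb i < N') (F : Finset ℕ) :
    (List.range N').filter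
        (fun j => j ∉ Finset.range N' \ (Finset.range N).image emb ∪ F.image emb)
      = ((List.range N).filter (fun i => i ∉ F)).map emb := by
  have hmem : ∀ j, j ∈ (List.range N').filter
      (fun j => j ∉ Finset.range N' \ (Finset.range N).image emb ∪ F.image emb) ↔
      j ∈ ((List.range N).filter (fun i => i ∉ F)).map emb := by
    intro j
    rw [List.mem_filter, List.mem_map]
    constructor
    · rintro ⟨hj, hnot⟩
      rw [List.mem_range] at hj
      rw [decide_eq_true_eq, Finset.mem_union, not_or, Finset.mem_sdiff, not_and, not_not] at hnot
      obtain ⟨h1, h2⟩ := hnot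
      obtain ⟨i, hiN, rfl⟩ := Finset.mem_image.mp (h1 (Finset.mem_range.mpr hj))
      rw [Finset.mem_range] at hiN
      refine ⟨i, List.mem_filter.mpr ⟨List.mem_range.mpr hiN, ?_⟩, rfl⟩
      rw [decide_eq_true_eq]
      intro hiF
      exact h2 (Finset.mem_image.mpr ⟨i, hiF, rfl⟩)
    · rintro ⟨i, hi, rfl⟩
      obtain ⟨hiN, hiF⟩ := List.mem_filter.mp hi
      rw [List.mem_range] at hiN
      rw [decide_eq_true_eq] at hiF
      refine ⟨List.mem_range.mpr (hlt i hiN), ?_⟩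
      rw [decide_eq_true_eq, Finset.mem_union, not_or, Finset.mem_sdiff, not_and, not_not]
      refine ⟨fun _ => Finset.mem_image.mpr ⟨i, Finset.mem_range.mpr hiN, rfl⟩, ?_⟩
      intro hmem'
      obtain ⟨i', hi'F, he⟩ := Finset.mem_image.mp hmem'
      cases hmono.injective he
      exact hiF hi'F
  have hnd1 : ((List.range N').filter
      (fun j => j ∉ Finset.range N' \ (Finset.range N).image emb ∪ F.image emb)).Nodup :=
    (List.nodup_range (n := N')).filter _
  have hnd2 : (((List.range N).filter (fun i => i ∉ F)).map emb).Nodup :=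
    ((List.nodup_range (n := N)).filter _).map hmono.injective
  have hperm := List.Subperm.antisymm
      (List.subperm_of_subset hnd1 (fun a ha => (hmem a).mp ha))
      (List.subperm_of_subset hnd2 (fun a ha => (hmem a).mpr ha))
  have hs1 : ((List.range N').filter
      (fun j => j ∉ Finset.range N' \ (Finset.range N).image emb ∪ F.image emb)).Pairwise (· < ·) :=
    List.Pairwise.sublist List.filter_sublist (List.pairwise_lt_range (n := N'))
  have hs2 : (((List.range N).filter (fun i => i ∉ F)).map emb).Pairwise (· < ·) :=
    List.Pairwise.map emb (fun _ _ h => hmono h)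
      (List.Pairwise.sublist List.filter_sublist (List.pairwise_lt_range (n := N)))
  exact List.Perm.eq_of_pairwise (fun a b _ _ h1 h2 => absurd (h1.trans h2) (lt_irrefl _)) hs1 hs2 hperm

lemma getD_join_replicate (c wc : List B) (d : B) :
    ∀ (i k idx : ℕ), i < k → idx < c.length →
      ((List.replicate k c).flatten ++ wc).getD (i * c.length + idx) d = c.getD idx d := by
  intro i
  induction i with
  | zero =>
    intro k idx hik hidx
    obtain ⟨k', rfl⟩ : ∃ k', k = k' + 1 := ⟨k - 1, by omega⟩
    rw [List.replicate_succ, List.flatten_cons, List.append_assoc, Nat.zero_mul, Nat.zero_add,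
      List.getD_append _ _ _ _ hidx]
  | succ i ih =>
    intro k idx hik hidx
    obtain ⟨k', rfl⟩ : ∃ k', k = k' + 1 := ⟨k - 1, by omega⟩
    rw [List.replicate_succ, List.flatten_cons, List.append_assoc]
    have h : (i + 1) * c.length + idx = c.length + (i * c.length + idx) := by ring
    rw [h, List.getD_append_right _ _ _ _ (by omega), Nat.add_sub_cancel_left]
    exact ih k' idx (by omega) hidx

lemma containsReduced_demazure (Q : List B) : ContainsReduced cs Q (demazure cs Q) := by
  induction Q using List.reverseRecOn with
  | nil =>
    exact ⟨[], List.nil_sublist _, by simp [CoxeterSystem.IsReduced],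
      by simp [demazure]⟩
  | append_singleton Q s ih =>
    obtain ⟨L, hsub, hred, hprod⟩ := ih
    have hd : demazure cs (Q ++ [s]) =
        if cs.length (demazure cs Q) < cs.length (demazure cs Q * cs.simple s)
        then demazure cs Q * cs.simple s else demazure cs Q := by
      rw [demazure, demazure, List.foldl_append]
      rfl
    rw [hd]
    split_ifs with h
    · refine ⟨L ++ [s], hsub.append (List.Sublist.refl [s]), ?_, ?_⟩
      · have hlen : cs.length (demazure cs Q * cs.simple s)
            = cs.length (demazure cs Q) + 1 := by
          rcases cs.length_mul_simple (demazure cs Q) s with h1 | h1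
          · exact h1
          · omega
        rw [CoxeterSystem.IsReduced, cs.wordProd_append, cs.wordProd_singleton, hprod, hlen]
        have : cs.length (demazure cs Q) = L.length := by
          rw [← hprod]; exact hred
        simp [this]
      · rw [cs.wordProd_append, cs.wordProd_singleton, hprod]
    · exact ⟨L, hsub.trans (List.sublist_append_left Q [s]), hred, hprod⟩

/-- every word embeds into `c^k·w₀(c)`, and if its Demazure product is `w₀`,
then `Δ(Q,w₀)` is the link of the face given by the complementary positions. -/
theorem universality (w₀ : W) (hw₀ : IsLongest cs w₀) [Finite W]
    (c : List B) (hc : IsCoxeterWord c) (wc : List B) (hwc : IsSortingWord cs c w₀ wc)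
    (Q : List B) (k : ℕ) (hk : Q.length ≤ k)
    (Q' : List B) (hQ' : Q' = List.flatten (List.replicate k c) ++ wc)
    (emb : ℕ → ℕ) (hemb : ∀ i, emb i = i * c.length + c.idxOf (Q.getD i default))
    (G : Finset ℕ) (hG : G = Finset.range Q'.length \ (Finset.range Q.length).image emb) :
    complement Q' G = Q ∧
    (demazure cs Q = w₀ →
      IsFace cs Q' w₀ G ∧
      ∀ F : Finset ℕ, F ⊆ Finset.range Q.length →
        (IsFace cs Q w₀ F ↔ IsFace cs Q' w₀ (G ∪ F.image emb))) := by
  have hlen : 0 < c.length := List.length_pos_of_mem (hc.2 default)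
  have hidx : ∀ i, c.idxOf (Q.getD i default) < c.length := fun i =>
    List.idxOf_lt_length_iff.mpr (hc.2 _)
  have hmono : StrictMono emb := by
    intro i j hij
    rw [hemb, hemb]
    have h1 := hidx i
    have h2 := hidx j
    have h3 : (i + 1) * c.length ≤ j * c.length := Nat.mul_le_mul_right _ hij
    have h4 : (i + 1) * c.length = i * c.length + c.length := by ring
    omega
  have hQlen' : Q'.length = k * c.length + wc.length := by
    rw [hQ']
    simp [List.length_flatten, List.map_replicate, List.sum_replicate, smul_eq_mul, Nat.mul_comm]
  have hlt : ∀ i < Q.length, emb i < Q'.length := by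
    intro i hi
    rw [hemb, hQlen']
    have h1 := hidx i
    have h3 : (i + 1) * c.length ≤ k * c.length :=
      Nat.mul_le_mul_right _ (by omega)
    have h4 : (i + 1) * c.length = i * c.length + c.length := by ring
    omega
  have hletter : ∀ i < Q.length, Q'.getD (emb i) default = Q.getD i default := by
    intro i hi
    rw [hemb, hQ', getD_join_replicate c wc default i k _ (lt_of_lt_of_le hi hk) (hidx i),
      List.getD_eq_getElem _ _ (hidx i), List.getElem_idxOf (hidx i)]
  have hcompl : ∀ F : Finset ℕ, complement Q' (G ∪ F.image emb) = complement Q F := by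
    intro F
    rw [complement_eq, complement_eq, hG, filter_range_eq hmono hlt F, List.map_map]
    apply List.map_congr_left
    intro i hi
    have hiN : i < Q.length := List.mem_range.mp (List.mem_filter.mp hi).1
    exact hletter i hiN
  have hG0 : complement Q' G = Q := by
    have h := hcompl ∅
    rw [Finset.image_empty, Finset.union_empty] at h
    rw [h, complement_empty]
  refine ⟨hG0, ?_⟩
  intro hdem
  have hGsub : G ⊆ Finset.range Q'.length := by
    rw [hG]; exact Finset.sdiff_subset
  constructor
  · refine ⟨hGsub, ?_⟩
    rw [hG0, ← hdem]
    exact containsReduced_demazure cs Q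
  · intro F hFsub
    constructor
    · rintro ⟨_, hcr⟩
      refine ⟨Finset.union_subset hGsub ?_, ?_⟩
      · exact Finset.image_subset_iff.mpr fun i hi =>
          Finset.mem_range.mpr (hlt i (Finset.mem_range.mp (hFsub hi)))
      · rw [hcompl F]; exact hcr
    · rintro ⟨_, hcr⟩
      rw [hcompl F] at hcr
      exact ⟨hFsub, hcr⟩


end SubwordComplex
end
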